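/- Let H_n denote the n-th probabilists' Hermite polynomial and let Z be a standard Gaussian random variable (mean 0, variance 1). Then for every n ≥ 0, every a, b ∈ ℝ with a² + b² = 1, and every x ∈ ℝ: E[H_n(a x + b Z)] = a^n H_n(x). -/

import Mathlib

open MeasureTheory ProbabilityTheory Polynomial Real Filter
open scoped NNReal ENNReal


lemma integrable_pow_exp (k : ℕ) : Integrable (fun z : ℝ => z ^ k * Real.exp (-z^2/2)) := by
  have h : Integrable (fun x : ℝ => x ^ ((k:ℝ)) * Real.exp (-(1/2) * x^2)) :=
    integrable_rpow_mul_exp_neg_mul_sq one_half_pos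
      (lt_of_lt_of_le neg_one_lt_zero (Nat.cast_nonneg k))
  have e : (fun z : ℝ => z ^ k * Real.exp (-z^2/2))
      = fun x : ℝ => x ^ ((k:ℝ)) * Real.exp (-(1/2) * x^2) := by
    funext z
    rw [Real.rpow_natCast]
    ring_nf
  rw [e]; exact h

lemma gdecay_top (k : ℕ) :
    Tendsto (fun z : ℝ => z ^ k * Real.exp (-z^2/2)) atTop (nhds 0) := by
  have hlo := rpow_mul_exp_neg_mul_sq_isLittleO_exp_neg one_half_pos (k:ℝ)
  have hexp : Tendsto (fun x : ℝ => Real.exp (-(1/2) * x)) atTop (nhds 0) := by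
    apply Real.tendsto_exp_atBot.comp
    exact Tendsto.const_mul_atTop_of_neg (by norm_num) tendsto_id
  have h := hlo.isBigO.trans_tendsto hexp
  have e : (fun z : ℝ => z ^ k * Real.exp (-z^2/2))
      = fun x : ℝ => x ^ ((k:ℝ)) * Real.exp (-(1/2) * x^2) := by
    funext z; rw [Real.rpow_natCast]; ring_nf
  rw [e]; exact h

lemma gdecay_bot (k : ℕ) :
    Tendsto (fun z : ℝ => z ^ k * Real.exp (-z^2/2)) atBot (nhds 0) := by
  have h := (gdecay_top k).comp tendsto_neg_atBot_atTop
  have h2 := h.const_mul ((-1 : ℝ) ^ k)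
  rw [mul_zero] at h2
  have e : (fun z : ℝ => z ^ k * Real.exp (-z^2/2))
      = fun z : ℝ => (-1 : ℝ) ^ k * ((fun z : ℝ => z ^ k * Real.exp (-z^2/2)) ∘ Neg.neg) z := by
    funext z
    simp only [Function.comp_apply, neg_sq]
    rw [← mul_assoc, ← mul_pow]
    norm_num
  rw [e]; exact h2

lemma hasDerivAt_gauss (z : ℝ) :
    HasDerivAt (fun z : ℝ => Real.exp (-z^2/2)) (-z * Real.exp (-z^2/2)) z := by
  have h1 : HasDerivAt (fun z : ℝ => -z^2/2) (-z) z := by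
    have h : HasDerivAt (fun z : ℝ => -z^2/2) _ z := ((hasDerivAt_pow 2 z).neg.div_const 2)
    convert h using 1
    push_cast; ring
  have := h1.exp
  convert this using 1
  ring

lemma int_id_exp : ∫ z : ℝ, z * Real.exp (-z^2/2) = 0 := by
  have hderiv : ∀ z : ℝ, HasDerivAt (fun z : ℝ => -Real.exp (-z^2/2))
      (z * Real.exp (-z^2/2)) z := by
    intro z
    have this : HasDerivAt (fun z : ℝ => -Real.exp (-z^2/2)) _ z := (hasDerivAt_gauss z).neg
    convert this using 1
    ring
  have hint : Integrable (fun z : ℝ => z * Real.exp (-z^2/2)) := by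
    simpa using integrable_pow_exp 1
  have hbot : Tendsto (fun z : ℝ => -Real.exp (-z^2/2)) atBot (nhds 0) := by
    have := (gdecay_bot 0).neg
    simpa using this
  have htop : Tendsto (fun z : ℝ => -Real.exp (-z^2/2)) atTop (nhds 0) := by
    have := (gdecay_top 0).neg
    simpa using this
  have := integral_of_hasDerivAt_of_tendsto hderiv hint hbot htop
  simpa using this

lemma int_pow_exp_rec (k : ℕ) :
    ∫ z : ℝ, z^(k+2) * Real.exp (-z^2/2)
      = ((k:ℝ)+1) * ∫ z : ℝ, z^k * Real.exp (-z^2/2) := by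
  have hderiv : ∀ z : ℝ, HasDerivAt (fun z : ℝ => -(z^(k+1) * Real.exp (-z^2/2)))
      (z^(k+2) * Real.exp (-z^2/2) - ((k:ℝ)+1) * (z^k * Real.exp (-z^2/2))) z := by
    intro z
    have h : HasDerivAt (fun z : ℝ => -(z^(k+1) * Real.exp (-z^2/2))) _ z :=
      ((hasDerivAt_pow (k+1) z).mul (hasDerivAt_gauss z)).neg
    convert h using 1
    push_cast
    ring
  have hint : Integrable (fun z : ℝ =>
      z^(k+2) * Real.exp (-z^2/2) - ((k:ℝ)+1) * (z^k * Real.exp (-z^2/2))) :=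
    (integrable_pow_exp _).sub ((integrable_pow_exp k).const_mul _)
  have hbot : Tendsto (fun z : ℝ => -(z^(k+1) * Real.exp (-z^2/2))) atBot (nhds 0) := by
    simpa using (gdecay_bot (k+1)).neg
  have htop : Tendsto (fun z : ℝ => -(z^(k+1) * Real.exp (-z^2/2))) atTop (nhds 0) := by
    simpa using (gdecay_top (k+1)).neg
  have h0 := integral_of_hasDerivAt_of_tendsto hderiv hint hbot htop
  rw [integral_sub (integrable_pow_exp _) ((integrable_pow_exp k).const_mul _),
    MeasureTheory.integral_const_mul] at h0
  simp only [sub_zero] at h0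
  linarith




lemma pdf01 (z : ℝ) : gaussianPDFReal 0 1 z = (Real.sqrt (2*π))⁻¹ * Real.exp (-z^2/2) := by
  rw [gaussianPDFReal]
  norm_num

lemma integral_gauss_eq (g : ℝ → ℝ) :
    ∫ z, g z ∂(gaussianReal 0 1) = (Real.sqrt (2*π))⁻¹ * ∫ z, g z * Real.exp (-z^2/2) := by
  rw [gaussianReal_of_var_ne_zero 0 one_ne_zero]
  have h1 : gaussianPDF 0 1 = fun x => ((Real.toNNReal (gaussianPDFReal 0 1 x) : ℝ≥0) : ℝ≥0∞) := by
    funext x; rfl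
  rw [h1, integral_withDensity_eq_integral_smul ((measurable_gaussianPDFReal 0 1).real_toNNReal) g,
    ← MeasureTheory.integral_const_mul]
  congr 1; funext z
  rw [NNReal.smul_def, smul_eq_mul, Real.coe_toNNReal _ (gaussianPDFReal_nonneg 0 1 z), pdf01]
  ring

lemma integrable_gauss (p : ℝ[X]) : Integrable (fun z => p.eval z) (gaussianReal 0 1) := by
  rw [gaussianReal_of_var_ne_zero 0 one_ne_zero,
    integrable_withDensity_iff (measurable_gaussianPDF 0 1)
      (ae_of_all _ fun x => ENNReal.ofReal_lt_top)]
  have hpdf : ∀ z : ℝ, (gaussianPDF 0 1 z).toReal = (Real.sqrt (2*π))⁻¹ * Real.exp (-z^2/2) := by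
    intro z
    rw [gaussianPDF, ENNReal.toReal_ofReal (gaussianPDFReal_nonneg _ _ _), pdf01]
  have e : (fun z : ℝ => p.eval z * (gaussianPDF 0 1 z).toReal)
      = fun z => ∑ i ∈ Finset.range (p.natDegree + 1),
          (p.coeff i * (Real.sqrt (2*π))⁻¹) * (z ^ i * Real.exp (-z^2/2)) := by
    funext z
    rw [hpdf, Polynomial.eval_eq_sum_range, Finset.sum_mul]
    exact Finset.sum_congr rfl fun i _ => by ring
  rw [e]
  exact integrable_finset_sum _ fun i _ => ((integrable_pow_exp i).const_mul _)

noncomputable def gint (p : ℝ[X]) : ℝ := ∫ z, p.eval z ∂(gaussianReal 0 1)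

lemma gint_add (p q : ℝ[X]) : gint (p + q) = gint p + gint q := by
  unfold gint
  simp only [eval_add]
  exact integral_add (integrable_gauss p) (integrable_gauss q)

lemma gint_sub (p q : ℝ[X]) : gint (p - q) = gint p - gint q := by
  unfold gint
  simp only [eval_sub]
  exact integral_sub (integrable_gauss p) (integrable_gauss q)

lemma gint_Cmul (c : ℝ) (p : ℝ[X]) : gint (C c * p) = c * gint p := by
  unfold gint
  simp only [eval_mul, eval_C]
  exact MeasureTheory.integral_const_mul c _

lemma gint_one : gint 1 = 1 := by
  unfold gint
  simp

lemma mom1 : gint X = 0 := by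
  unfold gint
  simp only [eval_X]
  rw [integral_gauss_eq (fun z => z), int_id_exp, mul_zero]

lemma mom_rec (k : ℕ) : gint (X ^ (k+2)) = ((k:ℝ)+1) * gint (X ^ k) := by
  unfold gint
  simp only [eval_pow, eval_X]
  rw [integral_gauss_eq (fun z => z ^ (k+2)), integral_gauss_eq (fun z => z ^ k),
    int_pow_exp_rec k]
  ring

lemma gint_monomial (j : ℕ) (c : ℝ) : gint (monomial j c) = c * gint (X ^ j) := by
  rw [← C_mul_X_pow_eq_monomial, gint_Cmul]

lemma gint_stein (p : ℝ[X]) : gint (X * p) = gint (derivative p) := by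
  induction p using Polynomial.induction_on' with
  | add p q hp hq =>
    rw [mul_add, gint_add, hp, hq, derivative_add, gint_add]
  | monomial k c =>
    rw [X_mul_monomial, derivative_monomial, gint_monomial, gint_monomial]
    cases k with
    | zero =>
      simp [mom1]
    | succ j =>
      rw [mom_rec j]
      push_cast
      ring




noncomputable def hr (n : ℕ) : ℝ[X] := (hermite n).map (Int.castRingHom ℝ)

lemma hr_zero : hr 0 = 1 := by
  simp [hr, hermite_zero]

lemma hr_one : hr 1 = X := by
  simp [hr, hermite_one]

lemma hr_succ (n : ℕ) : hr (n+1) = X * hr n - derivative (hr n) := by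
  unfold hr
  rw [hermite_succ, Polynomial.map_sub, Polynomial.map_mul, map_X, derivative_map]

lemma dhr (n : ℕ) : derivative (hr (n+1)) = C ((n:ℝ)+1) * hr n := by
  induction n with
  | zero => simp [hr_one, hr_zero]
  | succ k ih =>
    rw [hr_succ (k+1), derivative_sub, derivative_mul, derivative_X, ih, derivative_mul,
      derivative_C, zero_mul, zero_add]
    push_cast
    rw [hr_succ k, show Polynomial.C ((k:ℝ)+1+1) = Polynomial.C ((k:ℝ)+1) + Polynomial.C 1 from by
      rw [← C_add], C_1]
    ring

lemma key (a b x : ℝ) (hab : a^2 + b^2 = 1) (n : ℕ) :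
    gint ((hr n).comp (C (a*x) + C b * X)) = a^n * (hr n).eval x := by
  set L : ℝ[X] := C (a*x) + C b * X with hL
  have base0 : gint ((hr 0).comp L) = a^0 * (hr 0).eval x := by
    rw [hr_zero, one_comp, gint_one]; simp
  have base1 : gint ((hr 1).comp L) = a^1 * (hr 1).eval x := by
    rw [hr_one, X_comp, hL]
    have : C (a*x) + C b * X = C (a*x) * 1 + C b * X := by ring
    rw [this, gint_add, gint_Cmul, gint_Cmul, gint_one, mom1]
    simp
  have step : ∀ k : ℕ, gint ((hr k).comp L) = a^k * (hr k).eval x →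
      gint ((hr (k+1)).comp L) = a^(k+1) * (hr (k+1)).eval x →
      gint ((hr (k+2)).comp L) = a^(k+2) * (hr (k+2)).eval x := by
    intro k ih0 ih1
    have e1 : (hr (k+2)).comp L
        = C (a*x) * ((hr (k+1)).comp L) + C b * (X * ((hr (k+1)).comp L))
          - C ((k:ℝ)+1) * ((hr k).comp L) := by
      rw [show (k+2) = (k+1)+1 from rfl, hr_succ (k+1), dhr k, sub_comp, mul_comp, mul_comp,
        X_comp, C_comp, hL]
      ring
    have hdL : derivative L = C b := by rw [hL]; simp
    have e2 : derivative ((hr (k+1)).comp L) = C b * (C ((k:ℝ)+1) * ((hr k).comp L)) := by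
      rw [derivative_comp, hdL, dhr k, mul_comp, C_comp]
    have e3 : gint (X * ((hr (k+1)).comp L)) = b * (((k:ℝ)+1) * gint ((hr k).comp L)) := by
      rw [gint_stein, e2, gint_Cmul, gint_Cmul]
    have e4 : (hr (k+2)).eval x = x * (hr (k+1)).eval x - ((k:ℝ)+1) * (hr k).eval x := by
      rw [show (k+2) = (k+1)+1 from rfl, hr_succ (k+1), dhr k]
      simp [eval_mul]
    rw [e1, gint_sub, gint_add, gint_Cmul, gint_Cmul, gint_Cmul, e3, ih0, ih1, e4]
    linear_combination ((k:ℝ)+1) * a^k * Polynomial.eval x (hr k) * hab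
  have main : ∀ m : ℕ, (gint ((hr m).comp L) = a^m * (hr m).eval x) ∧
      (gint ((hr (m+1)).comp L) = a^(m+1) * (hr (m+1)).eval x) := by
    intro m
    induction m with
    | zero => exact ⟨base0, base1⟩
    | succ k ih => exact ⟨ih.2, step k ih.1 ih.2⟩
  exact (main n).1

theorem stmt7 {Ω : Type*} [MeasurableSpace Ω] (μ : Measure Ω) [IsProbabilityMeasure μ]
    (Z : Ω → ℝ) (hZmeas : Measurable Z)
    (hZlaw : μ.map Z = gaussianReal 0 1)
    (n : ℕ) (a b x : ℝ) (hab : a ^ 2 + b ^ 2 = 1) :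
    ∫ ω, (Polynomial.aeval (a * x + b * Z ω) (Polynomial.hermite n) : ℝ) ∂μ =
      a ^ n * Polynomial.aeval x (Polynomial.hermite n) := by
  have haev : ∀ r : ℝ, (Polynomial.aeval r (Polynomial.hermite n) : ℝ) = (hr n).eval r := by
    intro r
    rw [hr, aeval_def, eval_map]
    rfl
  have hcomp : ∀ r : ℝ, (hr n).eval (a*x + b*r)
      = ((hr n).comp (C (a*x) + C b * X)).eval r := by
    intro r
    rw [eval_comp]
    simp
  calc ∫ ω, (Polynomial.aeval (a * x + b * Z ω) (Polynomial.hermite n) : ℝ) ∂μ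
      = ∫ ω, ((hr n).comp (C (a*x) + C b * X)).eval (Z ω) ∂μ := by
        congr 1; funext ω; rw [haev, hcomp]
    _ = ∫ z, ((hr n).comp (C (a*x) + C b * X)).eval z ∂(gaussianReal 0 1) := by
        rw [← hZlaw,
          integral_map hZmeas.aemeasurable (Polynomial.continuous _).aestronglyMeasurable]
    _ = a ^ n * (hr n).eval x := key a b x hab n
    _ = a ^ n * Polynomial.aeval x (Polynomial.hermite n) := by rw [haev]
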